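/- arXiv:2302.09510 — 2 statements merged into one kernel-verified Lean document; each statement's English description precedes it below -/
import Mathlib

section
/- Let $H$ be a Hilbert space and $H_0, H_1, \dots, H_d$ closed subspaces of $H$ with $H_{add} = H_0 + H_1 + \dots + H_d$. Let $\Pi_j$ denote the orthogonal projection onto $H_j$, and suppose there exists $\gamma \in (0,1)$ such that the Gauss–Seidel iteration operator $T = (I-\Pi_d)(I-\Pi_{d-1})\cdots(I-\Pi_0)$ satisfies $\|T x\| \le \gamma \|x\|$ for all $x \in H_{add}$. Then for any $y \in H$, the backfitting iterates defined by cyclically updating $m_j^{[r+1]} = \Pi_j\big(y - \sum_{l<j} m_l^{[r+1]} - \sum_{l>j} m_l^{[r]}\big)$ produce sums $m^{[r]} = \sum_j m_j^{[r]}$ converging geometrically to the orthogonal projection of $y$ onto the closure of $H_{add}$: $\|m^{[r]} - \Pi_{H_{add}} y\| \le C\gamma^{r}$ for some constant $C$ depending on the starting values. -/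
open scoped RealInnerProductSpace

private lemma foldl_cont {H : Type*} [NormedAddCommGroup H] :
    ∀ (n : ℕ) (f : H → Fin n → H), (∀ j, Continuous (fun z => f z j)) →
      Continuous fun x => Fin.foldl n f x := by
  intro n
  induction n with
  | zero => intro f _; simp only [Fin.foldl_zero]; exact continuous_id
  | succ n ih =>
    intro f hf
    have h : (fun x => Fin.foldl (n+1) f x)
        = (fun x => Fin.foldl n (fun z i => f z i.succ) (f x 0)) := by
      funext x; rw [Fin.foldl_succ]
    rw [h]
    exact (ih _ (fun j => hf j.succ)).comp (hf 0)

/-- geometric convergence of the (smooth) backfitting / Gauss–Seidel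
iteration in a Hilbert space when the composed projection operator
`T = (I-Π_d)⋯(I-Π_0)` is a contraction on the additive subspace. -/
theorem stmt_5 {H : Type*} [NormedAddCommGroup H] [InnerProductSpace ℝ H] [CompleteSpace H]
    (d : ℕ) (Hs : Fin (d+1) → Submodule ℝ H) [∀ j, CompleteSpace (Hs j)]
    (γ : ℝ) (hγ0 : 0 < γ) (hγ1 : γ < 1)
    (hT : ∀ x ∈ (⨆ j, Hs j : Submodule ℝ H),
      ‖Fin.foldl (d+1) (fun z j => z - ((Hs j).orthogonalProjectionOnto z : H)) x‖ ≤ γ * ‖x‖)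
    (y : H) (m : ℕ → Fin (d+1) → H)
    (hupd : ∀ r : ℕ, ∀ j : Fin (d+1),
      m (r+1) j = ((Hs j).orthogonalProjectionOnto
        (y - (∑ l ∈ Finset.univ.filter (fun l => l < j), m (r+1) l)
           - (∑ l ∈ Finset.univ.filter (fun l => j < l), m r l)) : H))
    (py : H) (hpy : py ∈ (⨆ j, Hs j : Submodule ℝ H).topologicalClosure)
    (hporth : ∀ w ∈ (⨆ j, Hs j : Submodule ℝ H).topologicalClosure, ⟪y - py, w⟫ = 0) :
    ∃ C : ℝ, ∀ r : ℕ, ‖(∑ j, m r j) - py‖ ≤ C * γ ^ r := by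
  set g : H → Fin (d+1) → H := fun z j => z - ((Hs j).orthogonalProjectionOnto z : H) with hg
  -- the iteration map is continuous
  have hcont : Continuous fun x => Fin.foldl (d+1) g x := by
    refine foldl_cont _ _ (fun j => ?_)
    exact continuous_id.sub (continuous_subtype_val.comp ((Hs j).orthogonalProjectionOnto).continuous)
  -- the contraction bound extends to the topological closure
  have hT' : ∀ x ∈ (⨆ j, Hs j : Submodule ℝ H).topologicalClosure,
      ‖Fin.foldl (d+1) g x‖ ≤ γ * ‖x‖ := by
    intro x hx
    have hclosed : IsClosed {x : H | ‖Fin.foldl (d+1) g x‖ ≤ γ * ‖x‖} :=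
      isClosed_le hcont.norm (continuous_const.mul continuous_norm)
    have hsub : ((⨆ j, Hs j : Submodule ℝ H) : Set H)
        ⊆ {x : H | ‖Fin.foldl (d+1) g x‖ ≤ γ * ‖x‖} := fun z hz => hT z hz
    have hx' : x ∈ closure ((⨆ j, Hs j : Submodule ℝ H) : Set H) := by
      rw [← Submodule.topologicalClosure_coe]; exact hx
    exact hclosed.closure_subset_iff.mpr hsub hx'
  have hHsle : ∀ j, Hs j ≤ (⨆ j, Hs j : Submodule ℝ H).topologicalClosure := fun j =>
    le_trans (le_iSup _ j) (Submodule.le_topologicalClosure _)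
  -- projections kill y - py
  have hproj0 : ∀ j, (Hs j).orthogonalProjectionOnto (y - py) = 0 := by
    intro j
    refine Submodule.orthogonalProjectionOnto_apply_of_mem_orthogonal ?_
    rw [Submodule.mem_orthogonal]
    intro u hu
    rw [real_inner_comm]
    exact hporth u (hHsle j hu)
  have hmemj : ∀ r j, m (r+1) j ∈ Hs j := by
    intro r j; rw [hupd]; exact SetLike.coe_mem _
  -- the key one-step identity
  have key : ∀ r : ℕ, (∀ j, m r j ∈ Hs j) →
      py - ∑ j, m (r+1) j = Fin.foldl (d+1) g (py - ∑ j, m r j) := by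
    intro r hr
    have gen : ∀ k : ℕ, ∀ hk : k ≤ d+1,
        Fin.foldl k (fun z j => g z (Fin.castLE hk j)) (py - ∑ j, m r j)
          = py - (∑ l ∈ Finset.univ.filter (fun l : Fin (d+1) => (l : ℕ) < k), m (r+1) l)
               - (∑ l ∈ Finset.univ.filter (fun l : Fin (d+1) => k ≤ (l : ℕ)), m r l) := by
      intro k
      induction k with
      | zero =>
        intro hk
        rw [Fin.foldl_zero]
        have h1 : Finset.univ.filter (fun l : Fin (d+1) => (l : ℕ) < 0) = ∅ := by
          simp
        have h2 : Finset.univ.filter (fun l : Fin (d+1) => 0 ≤ (l : ℕ)) = Finset.univ := by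
          simp
        rw [h1, h2]; simp
      | succ k ih =>
        intro hk
        have hk' : k ≤ d+1 := by omega
        set jk : Fin (d+1) := ⟨k, by omega⟩ with hjk
        have hcast : ∀ j : Fin k, Fin.castLE hk j.castSucc = Fin.castLE hk' j := by
          intro j; ext; simp
        rw [Fin.foldl_succ_last]
        have hfun : (fun (z : H) (j : Fin k) => g z (Fin.castLE hk j.castSucc))
            = fun z j => g z (Fin.castLE hk' j) := by
          funext z j; rw [hcast]
        rw [hfun, ih hk']
        have hlast : Fin.castLE hk (Fin.last k) = jk := by ext; simp [hjk]
        rw [hlast]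
        set A := ∑ l ∈ Finset.univ.filter (fun l : Fin (d+1) => (l : ℕ) < k), m (r+1) l with hA
        set B' := ∑ l ∈ Finset.univ.filter (fun l : Fin (d+1) => k+1 ≤ (l : ℕ)), m r l with hB'
        -- split off the jk term from the old-value sum
        have hBsplit : ∑ l ∈ Finset.univ.filter (fun l : Fin (d+1) => k ≤ (l : ℕ)), m r l
            = m r jk + B' := by
          have hset : Finset.univ.filter (fun l : Fin (d+1) => k ≤ (l : ℕ))
              = insert jk (Finset.univ.filter (fun l : Fin (d+1) => k+1 ≤ (l : ℕ))) := by
            ext l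
            simp only [Finset.mem_filter, Finset.mem_univ, true_and, Finset.mem_insert,
              Fin.ext_iff, hjk, Fin.val_mk]
            constructor
            · intro h; rcases Nat.eq_or_lt_of_le h with h | h
              · left; omega
              · right; omega
            · rintro (h | h) <;> omega
          rw [hset, Finset.sum_insert (by simp [hjk])]
        -- split off the jk term from the next new-value sum
        have hAsplit : ∑ l ∈ Finset.univ.filter (fun l : Fin (d+1) => (l : ℕ) < k+1), m (r+1) l
            = m (r+1) jk + A := by
          have hset : Finset.univ.filter (fun l : Fin (d+1) => (l : ℕ) < k+1)
              = insert jk (Finset.univ.filter (fun l : Fin (d+1) => (l : ℕ) < k)) := by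
            ext l
            simp only [Finset.mem_filter, Finset.mem_univ, true_and, Finset.mem_insert,
              Fin.ext_iff, hjk, Fin.val_mk]
            omega
          rw [hset, Finset.sum_insert (by simp [hjk])]
        -- the update identity at jk
        have hupdjk : m (r+1) jk = ((Hs jk).orthogonalProjectionOnto (y - A - B') : H) := by
          have h1 : Finset.univ.filter (fun l : Fin (d+1) => l < jk)
              = Finset.univ.filter (fun l : Fin (d+1) => (l : ℕ) < k) := by
            apply Finset.filter_congr; intro l _; simp [Fin.lt_def, hjk]
          have h2 : Finset.univ.filter (fun l : Fin (d+1) => jk < l)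
              = Finset.univ.filter (fun l : Fin (d+1) => k+1 ≤ (l : ℕ)) := by
            apply Finset.filter_congr; intro l _
            simp only [Fin.lt_def, hjk]
            constructor <;> (intro h; omega)
          have := hupd r jk
          rw [h1, h2] at this
          exact this
        -- compute the projection of the current residual
        have hu : py - A - (m r jk + B') = (y - A - B') - (y - py) - m r jk := by abel
        have hmrk : ((Hs jk).orthogonalProjectionOnto (m r jk) : H) = m r jk :=
          Submodule.starProjection_eq_self_iff.mpr (hr jk)
        have hPu : ((Hs jk).orthogonalProjectionOnto (py - A - (m r jk + B')) : H)
            = m (r+1) jk - m r jk := by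
          rw [hu, map_sub, map_sub, Submodule.coe_sub, Submodule.coe_sub, hproj0 jk, hmrk,
            ← hupdjk]
          simp
        rw [hBsplit, hAsplit]
        show (py - A - (m r jk + B'))
            - ((Hs jk).orthogonalProjectionOnto (py - A - (m r jk + B')) : H) = _
        rw [hPu]
        abel
    have := gen (d+1) le_rfl
    have hfun : (fun (z : H) (j : Fin (d+1)) => g z (Fin.castLE le_rfl j)) = g := by
      funext z j; rfl
    rw [hfun] at this
    have h1 : Finset.univ.filter (fun l : Fin (d+1) => (l : ℕ) < d+1) = Finset.univ := by
      ext l; simp [l.isLt]; omega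
    have h2 : Finset.univ.filter (fun l : Fin (d+1) => d+1 ≤ (l : ℕ)) = ∅ := by
      ext l; simp; omega
    rw [h1, h2] at this
    simpa using this.symm
  -- membership of residuals in the closure
  have hres : ∀ r : ℕ, (∀ j, m r j ∈ Hs j) →
      py - ∑ j, m r j ∈ (⨆ j, Hs j : Submodule ℝ H).topologicalClosure := by
    intro r hr
    exact sub_mem hpy (Submodule.sum_mem _ (fun j _ => hHsle j (hr j)))
  -- the one-step contraction for r ≥ 1
  have hstep : ∀ r : ℕ,
      ‖py - ∑ j, m (r+2) j‖ ≤ γ * ‖py - ∑ j, m (r+1) j‖ := by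
    intro r
    rw [key (r+1) (hmemj r)]
    exact hT' _ (hres (r+1) (hmemj r))
  -- geometric decay
  have hgeo : ∀ k : ℕ, ‖py - ∑ j, m (k+1) j‖ ≤ γ ^ k * ‖py - ∑ j, m 1 j‖ := by
    intro k
    induction k with
    | zero => simp
    | succ k ih =>
      calc ‖py - ∑ j, m (k+2) j‖ ≤ γ * ‖py - ∑ j, m (k+1) j‖ := hstep k
        _ ≤ γ * (γ ^ k * ‖py - ∑ j, m 1 j‖) := by
            exact mul_le_mul_of_nonneg_left ih (le_of_lt hγ0)
        _ = γ ^ (k+1) * ‖py - ∑ j, m 1 j‖ := by ring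
  refine ⟨max ‖(∑ j, m 0 j) - py‖ (‖py - ∑ j, m 1 j‖ / γ), ?_⟩
  intro r
  match r with
  | 0 =>
    simp only [pow_zero, mul_one]
    exact le_max_left _ _
  | (k+1) =>
    have h1 : ‖(∑ j, m (k+1) j) - py‖ = ‖py - ∑ j, m (k+1) j‖ := norm_sub_rev _ _
    rw [h1]
    calc ‖py - ∑ j, m (k+1) j‖ ≤ γ ^ k * ‖py - ∑ j, m 1 j‖ := hgeo k
      _ = (‖py - ∑ j, m 1 j‖ / γ) * γ ^ (k+1) := by
          field_simp; ring
      _ ≤ (max ‖(∑ j, m 0 j) - py‖ (‖py - ∑ j, m 1 j‖ / γ)) * γ ^ (k+1) := by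
          exact mul_le_mul_of_nonneg_right (le_max_right _ _) (by positivity)
end

section
/- Let $\alpha_j:[0,1]\to\mathbb{R}$ be $C^1$, let $E_j:[0,1]\to(0,\infty)$ be $C^1$ with $\int_0^1 \alpha_j E_j = 0$, and let $k$ be a bounded symmetric kernel supported in $[-1,1]$ with $\int k = 1$. Define $\nu_{n,j} = \int_0^1 \int_0^1 \alpha_j(x_j)\, k_h(x_j, u)\, E_j(u)\, du\, dx_j$ using the boundary-corrected kernel $k_h$. Then $\nu_{n,j} = O(h^2)$ as $h \to 0$; in particular $\nu_{n,j} \to 0$. -/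
set_option linter.unusedSectionVars false
set_option linter.unusedVariables false
set_option maxHeartbeats 1000000

open MeasureTheory

/-- The centering term `ν_{n,j} = ∫∫ α_j(x) k_h(x,u) E_j(u) du dx` with the
boundary-corrected kernel `k_h(x,u) = (∫₀¹ h⁻¹k(h⁻¹(s-u))ds)⁻¹ h⁻¹ k(h⁻¹(x-u))`. -/
noncomputable def nuTerm (k αj Ej : ℝ → ℝ) (h : ℝ) : ℝ :=
  ∫ x in (0:ℝ)..1, ∫ u in (0:ℝ)..1,
    αj x * ((∫ s in (0:ℝ)..1, h⁻¹ * k (h⁻¹ * (s - u)))⁻¹ * (h⁻¹ * k (h⁻¹ * (x - u)))) * Ej u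

open Set

namespace Stmt13Aux

lemma intOn_of_bound {f : ℝ → ℝ} {s : Set ℝ} {C : ℝ} (hμ : volume s < ⊤)
    (hm : AEStronglyMeasurable f (volume.restrict s)) (hC : ∀ x, |f x| ≤ C) :
    IntegrableOn f s := by
  refine Integrable.mono' (g := fun _ => C) (integrableOn_const hμ.ne) hm
    (Filter.Eventually.of_forall fun x => by simpa using hC x)

lemma intInt_of_bound {f : ℝ → ℝ} {a b C : ℝ}
    (hm : AEStronglyMeasurable f (volume.restrict (Set.uIoc a b)))
    (hC : ∀ x, |f x| ≤ C) : IntervalIntegrable f volume a b := by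
  rw [intervalIntegrable_iff]
  exact intOn_of_bound measure_Ioc_lt_top hm hC

lemma swap_bdd {a b c d C : ℝ} (f : ℝ → ℝ → ℝ)
    (hm : AEStronglyMeasurable (Function.uncurry f)
      ((volume.restrict (Ioc a b)).prod (volume.restrict (Ioc c d))))
    (hC : ∀ u x, |f u x| ≤ C) :
    ∫ u in Ioc a b, ∫ x in Ioc c d, f u x = ∫ x in Ioc c d, ∫ u in Ioc a b, f u x := by
  haveI : IsFiniteMeasure (volume.restrict (Ioc a b)) :=
    ⟨by rw [Measure.restrict_apply_univ]; exact measure_Ioc_lt_top⟩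
  haveI : IsFiniteMeasure (volume.restrict (Ioc c d)) :=
    ⟨by rw [Measure.restrict_apply_univ]; exact measure_Ioc_lt_top⟩
  exact integral_integral_swap (Integrable.mono' (integrable_const C) hm
    (Filter.Eventually.of_forall fun p => by rw [Real.norm_eq_abs]; exact hC p.1 p.2))

lemma meas_of_param {f : ℝ → ℝ → ℝ} (hf : Measurable (Function.uncurry f)) (s : Set ℝ) :
    StronglyMeasurable fun u => ∫ x in s, f u x :=
  hf.stronglyMeasurable.integral_prod_right'

lemma k_integrable {k : ℝ → ℝ} {B : ℝ} (hkm : Measurable k) (hkb : ∀ u, |k u| ≤ B)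
    (hks : Function.support k ⊆ Icc (-1) 1) : Integrable k := by
  have h1 : IntegrableOn k (Icc (-1:ℝ) 1) :=
    intOn_of_bound (by rw [Real.volume_Icc]; exact ENNReal.ofReal_lt_top)
      hkm.aestronglyMeasurable hkb
  rwa [integrableOn_iff_integrable_of_support_subset hks] at h1

lemma k_total {k : ℝ → ℝ} (hks : Function.support k ⊆ Icc (-1) 1) (hki : ∫ u, k u = 1) :
    ∫ t in (-1:ℝ)..1, k t = 1 := by
  rw [intervalIntegral.integral_of_le (by norm_num : (-1:ℝ) ≤ 1), ← integral_Icc_eq_integral_Ioc,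
    ← integral_indicator measurableSet_Icc, Set.indicator_eq_self.2 hks, hki]

lemma k_half {k : ℝ → ℝ} {B : ℝ} (hkm : Measurable k) (hkb : ∀ u, |k u| ≤ B)
    (hsym : ∀ u, k (-u) = k u) (hks : Function.support k ⊆ Icc (-1) 1)
    (hki : ∫ u, k u = 1) : ∫ t in (0:ℝ)..1, k t = 1/2 := by
  have kint := k_integrable hkm hkb hks
  have h1 : ∫ t in (-1:ℝ)..0, k t = ∫ t in (0:ℝ)..1, k t := by
    have h := intervalIntegral.integral_comp_neg (a := (0:ℝ)) (b := 1) k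
    simp only [hsym, neg_zero] at h
    exact h.symm
  have h2 := intervalIntegral.integral_add_adjacent_intervals (a := (-1:ℝ)) (b := 0) (c := 1)
    kint.intervalIntegrable kint.intervalIntegrable
  rw [k_total hks hki] at h2
  linarith

end Stmt13Aux

namespace Stmt13Aux

noncomputable def phi (k : ℝ → ℝ) (h t : ℝ) : ℝ := h⁻¹ * k (h⁻¹ * t)

noncomputable def Nf (k : ℝ → ℝ) (h u : ℝ) : ℝ := ∫ s in Ioc (0:ℝ) 1, phi k h (s - u)

noncomputable def Wf (k : ℝ → ℝ) (h u : ℝ) : ℝ := max (Nf k h u) (1/2)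

section Phi

variable {k : ℝ → ℝ} {B h : ℝ}

lemma phi_nonneg (hk0 : ∀ u, 0 ≤ k u) (h0 : 0 < h) (t : ℝ) : 0 ≤ phi k h t :=
  mul_nonneg (inv_nonneg.2 h0.le) (hk0 _)

lemma phi_meas (hkm : Measurable k) : Measurable (phi k h) :=
  (hkm.comp (measurable_const.mul measurable_id)).const_mul _

lemma phi_bound (hkb : ∀ u, |k u| ≤ B) (h0 : 0 < h) (t : ℝ) : |phi k h t| ≤ h⁻¹ * B := by
  rw [phi, abs_mul, abs_of_nonneg (inv_nonneg.2 h0.le)]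
  exact mul_le_mul_of_nonneg_left (hkb _) (inv_nonneg.2 h0.le)

lemma phi_supp (hks : Function.support k ⊆ Icc (-1) 1) (h0 : 0 < h) {t : ℝ}
    (ht : phi k h t ≠ 0) : |t| ≤ h := by
  have h1 : k (h⁻¹ * t) ≠ 0 := fun h' => ht (by simp [phi, h'])
  have h2 := hks h1
  rw [mem_Icc] at h2
  have := abs_le.2 ⟨h2.1, h2.2⟩
  rw [abs_mul, abs_of_nonneg (inv_nonneg.2 h0.le)] at this
  calc |t| = h * (h⁻¹ * |t|) := by field_simp
  _ ≤ h * 1 := by nlinarith [abs_nonneg t]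
  _ = h := mul_one h

lemma phi_integrable (hkm : Measurable k) (hkb : ∀ u, |k u| ≤ B)
    (hks : Function.support k ⊆ Icc (-1) 1) (h0 : 0 < h) : Integrable (phi k h) := by
  have h1 : IntegrableOn (phi k h) (Icc (-h) h) :=
    intOn_of_bound (by rw [Real.volume_Icc]; exact ENNReal.ofReal_lt_top)
      (phi_meas hkm).aestronglyMeasurable (phi_bound hkb h0)
  have h2 : Function.support (phi k h) ⊆ Icc (-h) h := by
    intro t ht
    have := phi_supp hks h0 ht
    rw [mem_Icc]
    exact ⟨(abs_le.1 this).1, (abs_le.1 this).2⟩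
  rwa [integrableOn_iff_integrable_of_support_subset h2] at h1

lemma phi_total (hki : ∫ u, k u = 1) (h0 : 0 < h) : ∫ t, phi k h t = 1 := by
  have : ∫ t, phi k h t = h⁻¹ * ∫ t, k (h⁻¹ * t) := by
    simp only [phi]; rw [integral_const_mul]
  rw [this, Measure.integral_comp_mul_left k h⁻¹, hki]
  simp [abs_of_pos h0, smul_eq_mul]
  field_simp

end Phi

end Stmt13Aux

namespace Stmt13Aux

section Mass

variable {k : ℝ → ℝ} {B h : ℝ}
variable (hkm : Measurable k) (hkb : ∀ u, |k u| ≤ B) (hk0 : ∀ u, 0 ≤ k u)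
  (hks : Function.support k ⊆ Icc (-1) 1) (hki : ∫ u, k u = 1) (h0 : 0 < h)

include hkm hkb hks hki h0 in
lemma phi_mass_right (hk0 : ∀ u, 0 ≤ k u) (u : ℝ) (s : Set ℝ) :
    ∫ x in s, phi k h (x - u) ≤ 1 := by
  have hint := (phi_integrable hkm hkb hks h0).comp_sub_right u
  calc ∫ x in s, phi k h (x - u) ≤ ∫ x, phi k h (x - u) :=
        setIntegral_le_integral hint (Filter.Eventually.of_forall fun x => phi_nonneg hk0 h0 _)
  _ = 1 := by rw [integral_sub_right_eq_self (phi k h) u, phi_total hki h0]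

include hkm hkb hks hki h0 in
lemma phi_mass_left (hk0 : ∀ u, 0 ≤ k u) (x : ℝ) (s : Set ℝ) :
    ∫ u in s, phi k h (x - u) ≤ 1 := by
  have hint : Integrable (fun u => phi k h (x - u)) :=
    (integrable_comp_sub_left (phi k h) x).2 (phi_integrable hkm hkb hks h0)
  calc ∫ u in s, phi k h (x - u) ≤ ∫ u, phi k h (x - u) :=
        setIntegral_le_integral hint (Filter.Eventually.of_forall fun x => phi_nonneg hk0 h0 _)
  _ = 1 := by rw [integral_sub_left_eq_self (phi k h) volume x, phi_total hki h0]

end Mass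

end Stmt13Aux

namespace Stmt13Aux

section Nsec

variable {k : ℝ → ℝ} {B h : ℝ}
variable (hkm : Measurable k) (hkb : ∀ u, |k u| ≤ B) (hk0 : ∀ u, 0 ≤ k u)
  (hsym : ∀ u, k (-u) = k u)
  (hks : Function.support k ⊆ Icc (-1) 1) (hki : ∫ u, k u = 1) (h0 : 0 < h) (h12 : h < 1/2)

include hkm in
lemma Nf_meas : Measurable (Nf k h) := by
  have : Measurable (Function.uncurry fun (u s : ℝ) => phi k h (s - u)) :=
    (phi_meas hkm).comp (measurable_snd.sub measurable_fst)
  exact (meas_of_param this (Ioc 0 1)).measurable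

include hkm hkb hks hki h0 hk0 in
lemma Nf_le_one (u : ℝ) : Nf k h u ≤ 1 := phi_mass_right hkm hkb hks hki h0 hk0 u _

include hkm hkb hk0 hks h0 in
lemma Nf_nonneg (u : ℝ) : 0 ≤ Nf k h u :=
  setIntegral_nonneg measurableSet_Ioc fun x _ => phi_nonneg hk0 h0 _

-- ∫ s in 0..c, phi = ∫ t in 0..(c/h) ... specialized: ∫ s in 0..h, phi = ∫ k on 0..1
include hkm h0 in
lemma phi_int_zero_h : ∫ s in (0:ℝ)..h, phi k h s = ∫ t in (0:ℝ)..1, k t := by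
  simp only [phi]
  rw [intervalIntegral.integral_const_mul, intervalIntegral.integral_comp_mul_left k
    (inv_ne_zero h0.ne')]
  rw [mul_zero, inv_mul_cancel₀ h0.ne', smul_eq_mul, inv_inv]
  rw [← mul_assoc, inv_mul_cancel₀ h0.ne', one_mul]

include hkm h0 in
lemma phi_int_negh_zero : ∫ s in (-h)..(0:ℝ), phi k h s = ∫ t in (-1:ℝ)..0, k t := by
  simp only [phi]
  rw [intervalIntegral.integral_const_mul, intervalIntegral.integral_comp_mul_left k
    (inv_ne_zero h0.ne')]
  rw [mul_zero, smul_eq_mul, inv_inv]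
  rw [show h⁻¹ * -h = -1 by field_simp]
  rw [← mul_assoc, inv_mul_cancel₀ h0.ne', one_mul]

include hkm hkb hk0 hsym hks hki h0 h12 in
lemma Nf_half {u : ℝ} (hu : u ∈ Icc (0:ℝ) 1) : 1/2 ≤ Nf k h u := by
  have hphi := phi_integrable hkm hkb hks h0
  have hint : ∀ a b : ℝ, IntervalIntegrable (fun s => phi k h (s - u)) volume a b :=
    fun a b => (hphi.comp_sub_right u).intervalIntegrable
  have hN : Nf k h u = ∫ s in (0:ℝ)..1, phi k h (s - u) := by
    rw [intervalIntegral.integral_of_le zero_le_one]; rfl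
  have khalf := k_half hkm hkb hsym hks hki
  have knegh : ∫ t in (-1:ℝ)..0, k t = 1/2 := by
    have := k_total hks hki
    have h2 := intervalIntegral.integral_add_adjacent_intervals (a := (-1:ℝ)) (b := 0) (c := 1)
      (k_integrable hkm hkb hks).intervalIntegrable (k_integrable hkm hkb hks).intervalIntegrable
    rw [this, khalf] at h2; linarith
  rcases le_or_gt u (1/2) with hc | hc
  · -- use [u, u+h]
    have e1 : ∫ s in u..(u+h), phi k h (s - u) = 1/2 := by
      rw [intervalIntegral.integral_comp_sub_right (fun s => phi k h s) u]
      rw [sub_self, add_sub_cancel_left, phi_int_zero_h hkm h0, khalf]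
    have s1 := intervalIntegral.integral_add_adjacent_intervals (a := (0:ℝ)) (b := u)
      (c := u + h) (hint 0 u) (hint u (u+h))
    have s2 := intervalIntegral.integral_add_adjacent_intervals (a := (0:ℝ)) (b := u + h)
      (c := 1) (hint 0 (u+h)) (hint (u+h) 1)
    have n1 : 0 ≤ ∫ s in (0:ℝ)..u, phi k h (s - u) :=
      intervalIntegral.integral_nonneg hu.1 (fun x _ => phi_nonneg hk0 h0 _)
    have n2 : 0 ≤ ∫ s in (u+h)..1, phi k h (s - u) :=
      intervalIntegral.integral_nonneg (by linarith) (fun x _ => phi_nonneg hk0 h0 _)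
    rw [hN, ← s2, ← s1]
    linarith
  · -- use [u-h, u]
    have e1 : ∫ s in (u-h)..u, phi k h (s - u) = 1/2 := by
      rw [intervalIntegral.integral_comp_sub_right (fun s => phi k h s) u]
      rw [sub_self]
      rw [show u - h - u = -h by ring]
      rw [phi_int_negh_zero hkm h0, knegh]
    have s1 := intervalIntegral.integral_add_adjacent_intervals (a := (0:ℝ)) (b := u - h)
      (c := u) (hint 0 (u-h)) (hint (u-h) u)
    have s2 := intervalIntegral.integral_add_adjacent_intervals (a := (0:ℝ)) (b := u)
      (c := 1) (hint 0 u) (hint u 1)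
    have n1 : 0 ≤ ∫ s in (0:ℝ)..(u-h), phi k h (s - u) :=
      intervalIntegral.integral_nonneg (by linarith) (fun x _ => phi_nonneg hk0 h0 _)
    have n2 : 0 ≤ ∫ s in u..1, phi k h (s - u) :=
      intervalIntegral.integral_nonneg hu.2 (fun x _ => phi_nonneg hk0 h0 _)
    rw [hN, ← s2, ← s1]
    linarith

include hkm hkb hks hki h0 in
lemma Nf_interior {u : ℝ} (hu : u ∈ Icc h (1 - h)) : Nf k h u = 1 := by
  have hsupp : Function.support (fun s => phi k h (s - u)) ⊆ Icc 0 1 := by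
    intro s hs
    have habs := phi_supp hks h0 hs
    rw [abs_le] at habs
    rw [mem_Icc]
    constructor <;> [linarith [hu.1]; linarith [hu.2]]
  have : Nf k h u = ∫ s in Icc (0:ℝ) 1, phi k h (s - u) := (integral_Icc_eq_integral_Ioc).symm
  rw [this, ← integral_indicator measurableSet_Icc, Set.indicator_eq_self.2 hsupp,
    integral_sub_right_eq_self (phi k h) u, phi_total hki h0]

end Nsec

end Stmt13Aux

namespace Stmt13Aux

set_option linter.unusedSectionVars false

section Wsec

variable {k α : ℝ → ℝ} {B Lα Mα h : ℝ}
variable (hkm : Measurable k) (hkb : ∀ u, |k u| ≤ B) (hk0 : ∀ u, 0 ≤ k u)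
  (hsym : ∀ u, k (-u) = k u)
  (hks : Function.support k ⊆ Icc (-1) 1) (hki : ∫ u, k u = 1) (h0 : 0 < h) (h12 : h < 1/2)

include hkm in
lemma Wf_meas : Measurable (Wf k h) := (Nf_meas hkm).max measurable_const

lemma Wf_ge : ∀ u, 1/2 ≤ Wf k h u := fun u => le_max_right _ _

lemma Wf_pos (u : ℝ) : 0 < Wf k h u := lt_of_lt_of_le (by norm_num) (Wf_ge u)

include hkm hkb hk0 hks hki h0 in
lemma Wf_le_one (u : ℝ) : Wf k h u ≤ 1 :=
  max_le (Nf_le_one hkm hkb hk0 hks hki h0 u) (by norm_num)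

lemma Winv_le_two (u : ℝ) : (Wf k h u)⁻¹ ≤ 2 := by
  rw [show (2:ℝ) = (1/2)⁻¹ by norm_num]
  exact inv_anti₀ (by norm_num) (Wf_ge u)

lemma Winv_nonneg (u : ℝ) : 0 ≤ (Wf k h u)⁻¹ := inv_nonneg.2 (Wf_pos u).le

lemma Winv_abs_le_two (u : ℝ) : |(Wf k h u)⁻¹| ≤ 2 := by
  rw [abs_of_nonneg (Winv_nonneg u)]; exact Winv_le_two u

include hkm hkb hk0 hsym hks hki h0 h12 in
lemma Wf_eq_Nf {u : ℝ} (hu : u ∈ Icc (0:ℝ) 1) : Wf k h u = Nf k h u :=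
  max_eq_left (Nf_half hkm hkb hk0 hsym hks hki h0 h12 hu)

include hkm hkb hk0 hsym hks hki h0 h12 in
lemma Wf_interior {u : ℝ} (hu : u ∈ Icc h (1-h)) : Wf k h u = 1 := by
  rw [Wf_eq_Nf hkm hkb hk0 hsym hks hki h0 h12
    ⟨by linarith [hu.1], by linarith [hu.2]⟩]
  exact Nf_interior hkm hkb hks hki h0 hu

-- key pointwise bounds
include hks h0 in
lemma key1 (hk0 : ∀ u, 0 ≤ k u) (hαL : ∀ x y, |α x - α y| ≤ Lα * |x - y|)
    (hLα : 0 ≤ Lα) (x u : ℝ) :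
    |(α x - α u) * phi k h (x - u)| ≤ (Lα * h) * phi k h (x - u) := by
  by_cases hz : phi k h (x - u) = 0
  · simp [hz]
  · have habs := phi_supp hks h0 hz
    rw [abs_mul, abs_of_nonneg (phi_nonneg hk0 h0 _)]
    refine mul_le_mul_of_nonneg_right ?_ (phi_nonneg hk0 h0 _)
    calc |α x - α u| ≤ Lα * |x - u| := hαL x u
    _ ≤ Lα * h := mul_le_mul_of_nonneg_left habs hLα

end Wsec

end Stmt13Aux

namespace Stmt13Aux

noncomputable def Af (k α : ℝ → ℝ) (h u : ℝ) : ℝ := ∫ x in Ioc (0:ℝ) 1, α x * phi k h (x - u)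

noncomputable def Df (k α : ℝ → ℝ) (h u : ℝ) : ℝ := Af k α h u - α u * Wf k h u

section ADsec

variable {k α : ℝ → ℝ} {B Lα Mα h : ℝ}
variable (hkm : Measurable k) (hkb : ∀ u, |k u| ≤ B) (hk0 : ∀ u, 0 ≤ k u)
  (hsym : ∀ u, k (-u) = k u)
  (hks : Function.support k ⊆ Icc (-1) 1) (hki : ∫ u, k u = 1) (h0 : 0 < h) (h12 : h < 1/2)
  (hαc : Continuous α) (hαM : ∀ x, |α x| ≤ Mα) (hαL : ∀ x y, |α x - α y| ≤ Lα * |x - y|)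

include hkm hαc in
lemma Af_meas : Measurable (Af k α h) := by
  have : Measurable (Function.uncurry fun (u x : ℝ) => α x * phi k h (x - u)) :=
    (hαc.measurable.comp measurable_snd).mul
      ((phi_meas hkm).comp (measurable_snd.sub measurable_fst))
  exact (meas_of_param this (Ioc 0 1)).measurable

include hkm hkb h0 hαc hαM in
lemma Af_bound (hMα : 0 ≤ Mα) (u : ℝ) : |Af k α h u| ≤ Mα * (h⁻¹ * B) := by
  have hBnn : 0 ≤ B := le_trans (abs_nonneg _) (hkb 0)
  have := norm_setIntegral_le_of_norm_le_const (μ := volume) (s := Ioc (0:ℝ) 1)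
    (f := fun x => α x * phi k h (x - u)) (C := Mα * (h⁻¹ * B))
    (by rw [Real.volume_Ioc]; exact ENNReal.ofReal_lt_top)
    (fun x _ => by
      rw [Real.norm_eq_abs, abs_mul]
      exact mul_le_mul (hαM x) (phi_bound hkb h0 _) (abs_nonneg _) hMα)
  · calc |Af k α h u| ≤ Mα * (h⁻¹ * B) * (volume (Ioc (0:ℝ) 1)).toReal := this
    _ = Mα * (h⁻¹ * B) := by
      rw [Real.volume_Ioc]; norm_num

include hkm hkb h0 hαM hαc in
lemma Df_meas : Measurable (Df k α h) :=
  (Af_meas hkm hαc).sub (hαc.measurable.mul (Wf_meas hkm))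

include hkm hkb hk0 hks hki h0 hαc hαM in
lemma Df_bound_global (hMα : 0 ≤ Mα) (u : ℝ) : |Df k α h u| ≤ Mα * (h⁻¹ * B) + Mα := by
  rw [Df]
  calc |Af k α h u - α u * Wf k h u| ≤ |Af k α h u| + |α u * Wf k h u| := abs_sub _ _
  _ ≤ Mα * (h⁻¹ * B) + Mα := by
      refine add_le_add (Af_bound hkm hkb h0 hαc hαM hMα u) ?_
      rw [abs_mul]
      calc |α u| * |Wf k h u| ≤ Mα * 1 := by
            refine mul_le_mul (hαM u) ?_ (abs_nonneg _) hMα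
            rw [abs_of_nonneg (Wf_pos u).le]
            exact Wf_le_one hkm hkb hk0 hks hki h0 u
      _ = Mα := mul_one Mα

include hkm hkb hk0 hsym hks hki h0 h12 hαc hαM in
lemma Df_rep (hMα : 0 ≤ Mα) {u : ℝ} (hu : u ∈ Icc (0:ℝ) 1) :
    Df k α h u = ∫ x in Ioc (0:ℝ) 1, (α x - α u) * phi k h (x - u) := by
  have hint1 : IntegrableOn (fun x => α x * phi k h (x - u)) (Ioc 0 1) :=
    intOn_of_bound (by rw [Real.volume_Ioc]; exact ENNReal.ofReal_lt_top)
      ((hαc.measurable.mul ((phi_meas hkm).comp (measurable_id.sub measurable_const)))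
        |>.aestronglyMeasurable).restrict
      (fun x => by
        rw [abs_mul]
        exact mul_le_mul (hαM x) (phi_bound hkb h0 _) (abs_nonneg _) hMα)
  have hint2 : IntegrableOn (fun x => α u * phi k h (x - u)) (Ioc 0 1) :=
    intOn_of_bound (by rw [Real.volume_Ioc]; exact ENNReal.ofReal_lt_top)
      ((measurable_const.mul ((phi_meas hkm).comp (measurable_id.sub measurable_const)))
        |>.aestronglyMeasurable).restrict
      (fun x => by
        rw [abs_mul]
        exact mul_le_mul (hαM u) (phi_bound hkb h0 _) (abs_nonneg _) hMα)
  have : ∫ x in Ioc (0:ℝ) 1, (α x - α u) * phi k h (x - u)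
      = (∫ x in Ioc (0:ℝ) 1, α x * phi k h (x - u))
        - ∫ x in Ioc (0:ℝ) 1, α u * phi k h (x - u) := by
    rw [← integral_sub hint1 hint2]
    congr 1; funext x; ring
  rw [this, integral_const_mul]
  rw [Df, Wf_eq_Nf hkm hkb hk0 hsym hks hki h0 h12 hu]
  rfl

include hkm hkb hk0 hsym hks hki h0 h12 hαc hαM hαL in
lemma Df_le (hMα : 0 ≤ Mα) (hLα : 0 ≤ Lα) {u : ℝ} (hu : u ∈ Icc (0:ℝ) 1) :
    |Df k α h u| ≤ Lα * h := by
  rw [Df_rep hkm hkb hk0 hsym hks hki h0 h12 hαc hαM hMα hu]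
  have hmono : ∫ x in Ioc (0:ℝ) 1, ‖(α x - α u) * phi k h (x - u)‖
      ≤ ∫ x in Ioc (0:ℝ) 1, (Lα * h) * phi k h (x - u) := by
    refine setIntegral_mono_on ?_ ?_ measurableSet_Ioc ?_
    · refine intOn_of_bound (by rw [Real.volume_Ioc]; exact ENNReal.ofReal_lt_top) ?_
        (C := (Mα + Mα) * (h⁻¹ * B)) ?_
      · exact (((hαc.measurable.sub measurable_const).mul
          ((phi_meas hkm).comp (measurable_id.sub measurable_const)))
          |>.aestronglyMeasurable).norm.restrict
      · intro x
        rw [Real.norm_eq_abs, abs_abs, abs_mul]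
        refine mul_le_mul ?_ (phi_bound hkb h0 _) (abs_nonneg _) (by linarith)
        calc |α x - α u| ≤ |α x| + |α u| := abs_sub _ _
        _ ≤ Mα + Mα := add_le_add (hαM x) (hαM u)
    · refine intOn_of_bound (by rw [Real.volume_Ioc]; exact ENNReal.ofReal_lt_top) ?_
        (C := (Lα * h) * (h⁻¹ * B)) ?_
      · exact ((measurable_const.mul
          ((phi_meas hkm).comp (measurable_id.sub measurable_const)))
          |>.aestronglyMeasurable).restrict
      · intro x
        rw [abs_mul, abs_of_nonneg (mul_nonneg hLα h0.le)]
        exact mul_le_mul_of_nonneg_left (phi_bound hkb h0 _) (mul_nonneg hLα h0.le)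
    · intro x _
      rw [Real.norm_eq_abs]
      exact key1 hks h0 hk0 hαL hLα x u
  calc |∫ x in Ioc (0:ℝ) 1, (α x - α u) * phi k h (x - u)|
      ≤ ∫ x in Ioc (0:ℝ) 1, ‖(α x - α u) * phi k h (x - u)‖ := by
        rw [← Real.norm_eq_abs]; exact norm_integral_le_integral_norm _
  _ ≤ ∫ x in Ioc (0:ℝ) 1, (Lα * h) * phi k h (x - u) := hmono
  _ = (Lα * h) * ∫ x in Ioc (0:ℝ) 1, phi k h (x - u) := integral_const_mul _ _
  _ ≤ (Lα * h) * 1 := by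
      refine mul_le_mul_of_nonneg_left ?_ (mul_nonneg hLα h0.le)
      exact phi_mass_right hkm hkb hks hki h0 hk0 u _
  _ = Lα * h := mul_one _

end ADsec

end Stmt13Aux

namespace Stmt13Aux

noncomputable def Ff (k α E : ℝ → ℝ) (h u x : ℝ) : ℝ := E u * ((α x - α u) * phi k h (x - u))

section Fsec

variable {k α E : ℝ → ℝ} {B Lα LE Mα ME h : ℝ}
variable (hkm : Measurable k) (hkb : ∀ u, |k u| ≤ B) (hk0 : ∀ u, 0 ≤ k u)
  (hsym : ∀ u, k (-u) = k u)
  (hks : Function.support k ⊆ Icc (-1) 1) (hki : ∫ u, k u = 1) (h0 : 0 < h) (h12 : h < 1/2)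
  (hαc : Continuous α) (hαM : ∀ x, |α x| ≤ Mα) (hαL : ∀ x y, |α x - α y| ≤ Lα * |x - y|)
  (hEc : Continuous E) (hEM : ∀ x, |E x| ≤ ME) (hEL : ∀ x y, |E x - E y| ≤ LE * |x - y|)

include hsym in
lemma phi_sym (u x : ℝ) : phi k h (u - x) = phi k h (x - u) := by
  rw [phi, phi, show h⁻¹ * (u - x) = -(h⁻¹ * (x - u)) by ring, hsym]

include hkm hαc hEc in
lemma Ff_meas : Measurable (Function.uncurry fun u x => Ff k α E h u x) := by
  refine (hEc.measurable.comp measurable_fst).mul ?_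
  exact ((hαc.measurable.comp measurable_snd).sub (hαc.measurable.comp measurable_fst)).mul
    ((phi_meas hkm).comp (measurable_snd.sub measurable_fst))

include hkb h0 hαM hEM in
lemma Ff_bound_global (hMα : 0 ≤ Mα) (hME : 0 ≤ ME) (u x : ℝ) :
    |Ff k α E h u x| ≤ ME * ((Mα + Mα) * (h⁻¹ * B)) := by
  rw [Ff, abs_mul, abs_mul]
  refine mul_le_mul (hEM u) ?_ (mul_nonneg (abs_nonneg _) (abs_nonneg _)) hME
  refine mul_le_mul ?_ (phi_bound hkb h0 _) (abs_nonneg _) (by linarith)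
  calc |α x - α u| ≤ |α x| + |α u| := abs_sub _ _
  _ ≤ Mα + Mα := add_le_add (hαM x) (hαM u)

include hks hk0 h0 hαL hEM in
lemma Ff_bound_phi (hLα : 0 ≤ Lα) (hME : 0 ≤ ME) (u x : ℝ) :
    |Ff k α E h u x| ≤ (ME * (Lα * h)) * phi k h (x - u) := by
  calc |Ff k α E h u x| = |E u| * |(α x - α u) * phi k h (x - u)| := by
        rw [Ff]; exact abs_mul _ _
  _ ≤ ME * ((Lα * h) * phi k h (x - u)) :=
        mul_le_mul (hEM u) (key1 hks h0 hk0 hαL hLα x u) (abs_nonneg _) hME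
  _ = (ME * (Lα * h)) * phi k h (x - u) := by ring

include hks hk0 hsym h0 hαL hEL in
lemma Ff_pair (hLα : 0 ≤ Lα) (hLE : 0 ≤ LE) (u x : ℝ) :
    |Ff k α E h u x + Ff k α E h x u| ≤ (LE * (Lα * h^2)) * phi k h (x - u) := by
  have hsum : Ff k α E h u x + Ff k α E h x u
      = (E u - E x) * ((α x - α u) * phi k h (x - u)) := by
    rw [Ff, Ff, phi_sym hsym]
    ring
  rw [hsum]
  by_cases hz : phi k h (x - u) = 0
  · simp [hz]
  · have habs := phi_supp hks h0 hz
    rw [abs_mul, abs_mul, abs_of_nonneg (phi_nonneg hk0 h0 _)]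
    have e1 : |E u - E x| ≤ LE * h := by
      calc |E u - E x| ≤ LE * |u - x| := hEL u x
      _ = LE * |x - u| := by rw [abs_sub_comm]
      _ ≤ LE * h := mul_le_mul_of_nonneg_left habs hLE
    have e2 : |α x - α u| ≤ Lα * h := by
      calc |α x - α u| ≤ Lα * |x - u| := hαL x u
      _ ≤ Lα * h := mul_le_mul_of_nonneg_left habs hLα
    have := mul_le_mul (mul_le_mul e1 e2 (abs_nonneg _) (by positivity))
      (le_refl (phi k h (x - u))) (phi_nonneg hk0 h0 _) (by positivity)
    calc |E u - E x| * (|α x - α u| * phi k h (x - u))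
        = (|E u - E x| * |α x - α u|) * phi k h (x - u) := by ring
    _ ≤ ((LE * h) * (Lα * h)) * phi k h (x - u) := this
    _ = (LE * (Lα * h^2)) * phi k h (x - u) := by ring

include hkm hkb h0 hαc hαM hEc hEM in
lemma Ff_intOn (hMα : 0 ≤ Mα) (hME : 0 ≤ ME) (u a b : ℝ) :
    IntegrableOn (fun x => Ff k α E h u x) (Ioc a b) := by
  refine intOn_of_bound measure_Ioc_lt_top ?_
    (Ff_bound_global hkb h0 hαM hEM hMα hME u)
  exact (((Ff_meas hkm hαc hEc).comp (measurable_const.prodMk measurable_id))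
    |>.aestronglyMeasurable).restrict

include hkm hkb h0 hαc hαM hEc hEM in
lemma Ff_intOn' (hMα : 0 ≤ Mα) (hME : 0 ≤ ME) (u a b : ℝ) :
    IntegrableOn (fun x => Ff k α E h x u) (Ioc a b) := by
  refine intOn_of_bound measure_Ioc_lt_top ?_
    (fun x => Ff_bound_global hkb h0 hαM hEM hMα hME x u)
  exact (((Ff_meas hkm hαc hEc).comp (measurable_id.prodMk measurable_const))
    |>.aestronglyMeasurable).restrict

end Fsec

end Stmt13Aux

namespace Stmt13Aux

section Bounds

variable {k α E : ℝ → ℝ} {B Lα LE Mα ME h : ℝ}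
variable (hkm : Measurable k) (hkb : ∀ u, |k u| ≤ B) (hk0 : ∀ u, 0 ≤ k u)
  (hsym : ∀ u, k (-u) = k u)
  (hks : Function.support k ⊆ Icc (-1) 1) (hki : ∫ u, k u = 1) (h0 : 0 < h) (h12 : h < 1/2)
  (hαc : Continuous α) (hαM : ∀ x, |α x| ≤ Mα) (hαL : ∀ x y, |α x - α y| ≤ Lα * |x - y|)
  (hEc : Continuous E) (hEM : ∀ x, |E x| ≤ ME) (hEL : ∀ x y, |E x - E y| ≤ LE * |x - y|)
  (hMα : 0 ≤ Mα) (hME : 0 ≤ ME) (hLα : 0 ≤ Lα) (hLE : 0 ≤ LE)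

include hkm hkb hk0 hks hki h0 hαc hαM hαL hEc hEM hMα hME hLα in
lemma strip_bound {a b c d : ℝ} (hcd : c ≤ d) :
    |∫ u in Ioc a b, ∫ x in Ioc c d, Ff k α E h u x|
      ≤ (ME * (Lα * h)) * (d - c) := by
  have hφint := phi_integrable hkm hkb hks h0
  have hCnn : 0 ≤ ME * (Lα * h) := by positivity
  have hswap := swap_bdd (a := a) (b := b) (c := c) (d := d)
    (fun u x => Ff k α E h u x)
    ((Ff_meas hkm hαc hEc).aestronglyMeasurable)
    (Ff_bound_global hkb h0 hαM hEM hMα hME)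
  rw [hswap]
  have hpt : ∀ x ∈ Ioc c d, ‖∫ u in Ioc a b, Ff k α E h u x‖ ≤ ME * (Lα * h) := by
    intro x _
    calc ‖∫ u in Ioc a b, Ff k α E h u x‖
        ≤ ∫ u in Ioc a b, ‖Ff k α E h u x‖ := norm_integral_le_integral_norm _
    _ ≤ ∫ u in Ioc a b, (ME * (Lα * h)) * phi k h (x - u) := by
        refine setIntegral_mono_on ((Ff_intOn' hkm hkb h0 hαc hαM hEc hEM hMα hME x a b).norm)
          ((((integrable_comp_sub_left (phi k h) x).2 hφint).const_mul
            (ME * (Lα * h))).integrableOn) measurableSet_Ioc ?_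
        intro u _
        rw [Real.norm_eq_abs]
        exact Ff_bound_phi hk0 hks h0 hαL hEM hLα hME u x
    _ = (ME * (Lα * h)) * ∫ u in Ioc a b, phi k h (x - u) := integral_const_mul _ _
    _ ≤ (ME * (Lα * h)) * 1 :=
        mul_le_mul_of_nonneg_left (phi_mass_left hkm hkb hks hki h0 hk0 x _) hCnn
    _ = ME * (Lα * h) := mul_one _
  have hmeas : AEStronglyMeasurable (fun x => ∫ u in Ioc a b, Ff k α E h u x)
      (volume.restrict (Ioc c d)) := by
    have : Measurable (Function.uncurry fun (x u : ℝ) => Ff k α E h u x) :=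
      (Ff_meas hkm hαc hEc).comp measurable_swap
    exact ((meas_of_param this (Ioc a b)).measurable).aestronglyMeasurable.restrict
  have := norm_setIntegral_le_of_norm_le_const (μ := volume) measure_Ioc_lt_top hpt
  calc |∫ x in Ioc c d, ∫ u in Ioc a b, Ff k α E h u x|
      ≤ (ME * (Lα * h)) * (volume (Ioc c d)).toReal := by
        rw [← Real.norm_eq_abs]; exact this
  _ = (ME * (Lα * h)) * (d - c) := by
      rw [Real.volume_Ioc, ENNReal.toReal_ofReal (by linarith)]

end Bounds

end Stmt13Aux

namespace Stmt13Aux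

section MidSec

variable {k α E : ℝ → ℝ} {B Lα LE Mα ME h : ℝ}
variable (hkm : Measurable k) (hkb : ∀ u, |k u| ≤ B) (hk0 : ∀ u, 0 ≤ k u)
  (hsym : ∀ u, k (-u) = k u)
  (hks : Function.support k ⊆ Icc (-1) 1) (hki : ∫ u, k u = 1) (h0 : 0 < h) (h12 : h < 1/2)
  (hαc : Continuous α) (hαM : ∀ x, |α x| ≤ Mα) (hαL : ∀ x y, |α x - α y| ≤ Lα * |x - y|)
  (hEc : Continuous E) (hEM : ∀ x, |E x| ≤ ME) (hEL : ∀ x y, |E x - E y| ≤ LE * |x - y|)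
  (hMα : 0 ≤ Mα) (hME : 0 ≤ ME) (hLα : 0 ≤ Lα) (hLE : 0 ≤ LE)

include hkm hkb hk0 hsym hks hki h0 h12 hαc hαM hαL hEc hEM hEL hMα hME hLα hLE in
lemma mid_bound :
    |∫ u in Ioc h (1-h), ∫ x in Ioc h (1-h), Ff k α E h u x| ≤ LE * (Lα * h^2) := by
  set s : Set ℝ := Ioc h (1-h) with hs
  have hφint := phi_integrable hkm hkb hks h0
  have hCg : ∀ u x, |Ff k α E h u x| ≤ ME * ((Mα + Mα) * (h⁻¹ * B)) :=
    Ff_bound_global hkb h0 hαM hEM hMα hME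
  set CG : ℝ := ME * ((Mα + Mα) * (h⁻¹ * B)) with hCG
  have hCGnn : 0 ≤ CG := le_trans (abs_nonneg _) (hCg 0 0)
  -- the two inner-integral functions
  have hswapm : Measurable (Function.uncurry fun (u x : ℝ) => Ff k α E h x u) :=
    (Ff_meas hkm hαc hEc).comp measurable_swap
  have hmeasP : Measurable (fun u => ∫ x in s, Ff k α E h u x) :=
    (meas_of_param (Ff_meas hkm hαc hEc) s).measurable
  have hmeasQ : Measurable (fun u => ∫ x in s, Ff k α E h x u) :=
    (meas_of_param hswapm s).measurable
  have hvol : (volume s).toReal = 1 - 2*h := by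
    rw [hs, Real.volume_Ioc, ENNReal.toReal_ofReal (by linarith)]
    ring
  have hboundP : ∀ u, |∫ x in s, Ff k α E h u x| ≤ CG := by
    intro u
    have := norm_setIntegral_le_of_norm_le_const (μ := volume) (s := s)
      (f := fun x => Ff k α E h u x) (C := CG)
      measure_Ioc_lt_top (fun x _ => by rw [Real.norm_eq_abs]; exact hCg u x)
    rw [Real.norm_eq_abs] at this
    calc |∫ x in s, Ff k α E h u x| ≤ CG * (volume s).toReal := this
    _ ≤ CG * 1 := by rw [hvol]; nlinarith
    _ = CG := mul_one _
  have hboundQ : ∀ u, |∫ x in s, Ff k α E h x u| ≤ CG := by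
    intro u
    have := norm_setIntegral_le_of_norm_le_const (μ := volume) (s := s)
      (f := fun x => Ff k α E h x u) (C := CG)
      measure_Ioc_lt_top (fun x _ => by rw [Real.norm_eq_abs]; exact hCg x u)
    rw [Real.norm_eq_abs] at this
    calc |∫ x in s, Ff k α E h x u| ≤ CG * (volume s).toReal := this
    _ ≤ CG * 1 := by rw [hvol]; nlinarith
    _ = CG := mul_one _
  have hintP : IntegrableOn (fun u => ∫ x in s, Ff k α E h u x) s :=
    intOn_of_bound measure_Ioc_lt_top hmeasP.aestronglyMeasurable.restrict hboundP
  have hintQ : IntegrableOn (fun u => ∫ x in s, Ff k α E h x u) s :=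
    intOn_of_bound measure_Ioc_lt_top hmeasQ.aestronglyMeasurable.restrict hboundQ
  -- swap
  have hswap : ∫ u in s, ∫ x in s, Ff k α E h u x = ∫ u in s, ∫ x in s, Ff k α E h x u :=
    swap_bdd (fun u x => Ff k α E h u x)
      ((Ff_meas hkm hαc hEc).aestronglyMeasurable) hCg
  have hdouble : (∫ u in s, ∫ x in s, Ff k α E h u x) + (∫ u in s, ∫ x in s, Ff k α E h u x)
      = ∫ u in s, ∫ x in s, (Ff k α E h u x + Ff k α E h x u) := by
    nth_rewrite 2 [hswap]
    rw [← integral_add hintP hintQ]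
    refine setIntegral_congr_fun measurableSet_Ioc (fun u _ => ?_)
    exact (integral_add (Ff_intOn hkm hkb h0 hαc hαM hEc hEM hMα hME u h (1-h))
      (Ff_intOn' hkm hkb h0 hαc hαM hEc hEM hMα hME u h (1-h))).symm
  have hptw : ∀ u ∈ s, ‖∫ x in s, (Ff k α E h u x + Ff k α E h x u)‖ ≤ LE * (Lα * h^2) := by
    intro u _
    calc ‖∫ x in s, (Ff k α E h u x + Ff k α E h x u)‖
        ≤ ∫ x in s, ‖Ff k α E h u x + Ff k α E h x u‖ := norm_integral_le_integral_norm _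
    _ ≤ ∫ x in s, (LE * (Lα * h^2)) * phi k h (x - u) := by
        refine setIntegral_mono_on
          (((Ff_intOn hkm hkb h0 hαc hαM hEc hEM hMα hME u h (1-h)).add
            (Ff_intOn' hkm hkb h0 hαc hαM hEc hEM hMα hME u h (1-h))).norm)
          ((((phi_integrable hkm hkb hks h0).comp_sub_right u).const_mul
            (LE * (Lα * h^2))).integrableOn) measurableSet_Ioc ?_
        intro x _
        rw [Real.norm_eq_abs]
        exact Ff_pair hk0 hsym hks h0 hαL hEL hLα hLE u x
    _ = (LE * (Lα * h^2)) * ∫ x in s, phi k h (x - u) := integral_const_mul _ _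
    _ ≤ (LE * (Lα * h^2)) * 1 := by
        refine mul_le_mul_of_nonneg_left
          (phi_mass_right hkm hkb hks hki h0 hk0 u s) (by positivity)
    _ = LE * (Lα * h^2) := mul_one _
  have hmeasS : AEStronglyMeasurable (fun u => ∫ x in s, (Ff k α E h u x + Ff k α E h x u))
      (volume.restrict s) := by
    have : Measurable (Function.uncurry fun (u x : ℝ) => Ff k α E h u x + Ff k α E h x u) :=
      (Ff_meas hkm hαc hEc).add hswapm
    exact ((meas_of_param this s).measurable).aestronglyMeasurable.restrict
  have hfin := norm_setIntegral_le_of_norm_le_const (μ := volume) (s := s)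
    measure_Ioc_lt_top hptw
  have h2 : |(∫ u in s, ∫ x in s, Ff k α E h u x) + (∫ u in s, ∫ x in s, Ff k α E h u x)|
      ≤ LE * (Lα * h^2) := by
    rw [hdouble, ← Real.norm_eq_abs]
    calc ‖∫ u in s, ∫ x in s, (Ff k α E h u x + Ff k α E h x u)‖
        ≤ (LE * (Lα * h^2)) * (volume s).toReal := hfin
    _ ≤ (LE * (Lα * h^2)) * 1 := by
        rw [hvol]; nlinarith [mul_nonneg hLE (mul_nonneg hLα (sq_nonneg h))]
    _ = LE * (Lα * h^2) := mul_one _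
  have habs : |(∫ u in s, ∫ x in s, Ff k α E h u x)| ≤ LE * (Lα * h^2) := by
    rw [show (∫ u in s, ∫ x in s, Ff k α E h u x) + (∫ u in s, ∫ x in s, Ff k α E h u x)
      = 2 * (∫ u in s, ∫ x in s, Ff k α E h u x) by ring, abs_mul] at h2
    rw [abs_two] at h2
    linarith [abs_nonneg (∫ u in s, ∫ x in s, Ff k α E h u x)]
  exact habs

end MidSec

end Stmt13Aux

namespace Stmt13Aux

section Master

variable {k α E : ℝ → ℝ} {B Lα LE Mα ME h : ℝ}
variable (hkm : Measurable k) (hkb : ∀ u, |k u| ≤ B) (hk0 : ∀ u, 0 ≤ k u)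
  (hsym : ∀ u, k (-u) = k u)
  (hks : Function.support k ⊆ Icc (-1) 1) (hki : ∫ u, k u = 1) (h0 : 0 < h) (h12 : h < 1/2)
  (hαc : Continuous α) (hαM : ∀ x, |α x| ≤ Mα) (hαL : ∀ x y, |α x - α y| ≤ Lα * |x - y|)
  (hEc : Continuous E) (hEM : ∀ x, |E x| ≤ ME) (hEL : ∀ x y, |E x - E y| ≤ LE * |x - y|)

include hkm hkb hk0 hsym hks hki h0 h12 hαc hαM hαL hEc hEM hEL in
lemma nu_bound (hident : ∫ x in (0:ℝ)..1, α x * E x = 0) :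
    |nuTerm k α E h| ≤ (6 * ME * Lα + LE * Lα) * h ^ 2 := by
  have hBnn : 0 ≤ B := le_trans (abs_nonneg _) (hkb 0)
  have hMα : 0 ≤ Mα := le_trans (abs_nonneg _) (hαM 0)
  have hME : 0 ≤ ME := le_trans (abs_nonneg _) (hEM 0)
  have hLα : 0 ≤ Lα := by
    have := hαL 0 1
    simp only [zero_sub, abs_neg, abs_one, mul_one] at this
    linarith [abs_nonneg (α 0 - α 1)]
  have hLE : 0 ≤ LE := by
    have := hEL 0 1
    simp only [zero_sub, abs_neg, abs_one, mul_one] at this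
    linarith [abs_nonneg (E 0 - E 1)]
  have hWm := Wf_meas (k := k) (h := h) hkm
  have hφm := phi_meas (k := k) (h := h) hkm
  -- Step 1: rewrite with W
  have step1 : nuTerm k α E h = ∫ x in Ioc (0:ℝ) 1, ∫ u in Ioc (0:ℝ) 1,
      α x * ((Wf k h u)⁻¹ * phi k h (x - u)) * E u := by
    rw [nuTerm, intervalIntegral.integral_of_le zero_le_one]
    refine setIntegral_congr_fun measurableSet_Ioc (fun x hx => ?_)
    rw [intervalIntegral.integral_of_le zero_le_one]
    refine setIntegral_congr_fun measurableSet_Ioc (fun u hu => ?_)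
    have h1 : (∫ s in (0:ℝ)..1, h⁻¹ * k (h⁻¹ * (s - u))) = Nf k h u := by
      rw [intervalIntegral.integral_of_le zero_le_one]; rfl
    rw [h1, ← Wf_eq_Nf hkm hkb hk0 hsym hks hki h0 h12 (Ioc_subset_Icc_self hu)]
    rfl
  -- Step 2: Fubini
  have step2 : nuTerm k α E h = ∫ u in Ioc (0:ℝ) 1, ∫ x in Ioc (0:ℝ) 1,
      α x * ((Wf k h u)⁻¹ * phi k h (x - u)) * E u := by
    rw [step1]
    refine swap_bdd (C := Mα * (2 * (h⁻¹ * B)) * ME)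
      (fun x u => α x * ((Wf k h u)⁻¹ * phi k h (x - u)) * E u) ?_ ?_
    · exact (((hαc.measurable.comp measurable_fst).mul
        (((hWm.inv).comp measurable_snd).mul
          (hφm.comp (measurable_fst.sub measurable_snd)))).mul
        (hEc.measurable.comp measurable_snd)).aestronglyMeasurable
    · intro x u
      rw [abs_mul, abs_mul]
      refine mul_le_mul (mul_le_mul (hαM x) ?_ (abs_nonneg _) hMα) (hEM u) (abs_nonneg _) ?_
      · rw [abs_mul]
        refine mul_le_mul (Winv_abs_le_two u) (phi_bound hkb h0 _) (abs_nonneg _) (by norm_num)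
      · exact mul_nonneg hMα (mul_nonneg (by norm_num)
          (mul_nonneg (inv_nonneg.2 h0.le) hBnn))
  -- Step 3: inner integral is A
  have step3 : nuTerm k α E h = ∫ u in Ioc (0:ℝ) 1,
      ((Wf k h u)⁻¹ * E u) * Af k α h u := by
    rw [step2]
    refine setIntegral_congr_fun measurableSet_Ioc (fun u _ => ?_)
    have e : (fun x => α x * ((Wf k h u)⁻¹ * phi k h (x - u)) * E u)
        = fun x => ((Wf k h u)⁻¹ * E u) * (α x * phi k h (x - u)) := by
      funext x; ring
    rw [e, integral_const_mul]
    rfl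
  -- Step 4: subtract the constraint
  have hid' : (∫ u in Ioc (0:ℝ) 1, α u * E u) = 0 := by
    rw [← intervalIntegral.integral_of_le zero_le_one]; exact hident
  have hint1 : IntegrableOn (fun u => ((Wf k h u)⁻¹ * E u) * Af k α h u) (Ioc 0 1) := by
    refine intOn_of_bound measure_Ioc_lt_top
      (((hWm.inv.mul hEc.measurable).mul (Af_meas hkm hαc)).aestronglyMeasurable.restrict)
      (C := (2 * ME) * (Mα * (h⁻¹ * B))) ?_
    intro u
    rw [abs_mul, abs_mul]
    refine mul_le_mul (mul_le_mul (Winv_abs_le_two u) (hEM u) (abs_nonneg _) (by norm_num))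
      (Af_bound hkm hkb h0 hαc hαM hMα u) (abs_nonneg _)
      (mul_nonneg (by norm_num) hME)
  have hint2 : IntegrableOn (fun u => α u * E u) (Ioc 0 1) := by
    refine intOn_of_bound measure_Ioc_lt_top
      ((hαc.measurable.mul hEc.measurable).aestronglyMeasurable.restrict)
      (C := Mα * ME) ?_
    intro u
    rw [abs_mul]
    exact mul_le_mul (hαM u) (hEM u) (abs_nonneg _) hMα
  have step4 : nuTerm k α E h = ∫ u in Ioc (0:ℝ) 1,
      E u * (Wf k h u)⁻¹ * Df k α h u := by
    have e := integral_sub hint1 hint2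
    rw [hid', sub_zero] at e
    rw [step3, ← e]
    refine setIntegral_congr_fun measurableSet_Ioc (fun u _ => ?_)
    have hWne : Wf k h u ≠ 0 := (Wf_pos u).ne'
    rw [Df]
    field_simp
  -- G and its integrability
  set G : ℝ → ℝ := fun u => E u * (Wf k h u)⁻¹ * Df k α h u with hG
  have hGmeas : Measurable G :=
    (hEc.measurable.mul hWm.inv).mul (Df_meas hkm hkb h0 hαc hαM)
  have hGbdd : ∀ u, |G u| ≤ (ME * 2) * (Mα * (h⁻¹ * B) + Mα) := by
    intro u
    rw [hG]
    simp only
    rw [abs_mul, abs_mul]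
    refine mul_le_mul (mul_le_mul (hEM u) (Winv_abs_le_two u) (abs_nonneg _) hME)
      (Df_bound_global hkm hkb hk0 hks hki h0 hαc hαM hMα u) (abs_nonneg _)
      (mul_nonneg hME (by norm_num))
  have hGint : ∀ a b : ℝ, IntervalIntegrable G volume a b := fun a b =>
    intInt_of_bound (hGmeas.aestronglyMeasurable.restrict) hGbdd
  -- split
  have hsplit1 := intervalIntegral.integral_add_adjacent_intervals
    (a := (0:ℝ)) (b := h) (c := 1) (μ := volume) (hGint 0 h) (hGint h 1)
  have hsplit2 := intervalIntegral.integral_add_adjacent_intervals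
    (a := h) (b := 1-h) (c := 1) (μ := volume) (hGint h (1-h)) (hGint (1-h) 1)
  have h394 : nuTerm k α E h = (∫ u in (0:ℝ)..h, G u)
      + ((∫ u in h..(1-h), G u) + (∫ u in (1-h)..1, G u)) := by
    rw [step4, ← intervalIntegral.integral_of_le zero_le_one, ← hsplit1, ← hsplit2]
  -- edge bounds
  have hedge1 : |∫ u in (0:ℝ)..h, G u| ≤ ((ME * 2) * (Lα * h)) * h := by
    have := intervalIntegral.norm_integral_le_of_norm_le_const
      (C := (ME * 2) * (Lα * h)) (f := G) (a := 0) (b := h) ?_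
    · rw [Real.norm_eq_abs] at this
      calc |∫ u in (0:ℝ)..h, G u| ≤ (ME * 2) * (Lα * h) * |h - 0| := this
      _ = ((ME * 2) * (Lα * h)) * h := by rw [sub_zero, abs_of_pos h0]
    · intro u hu
      rw [Set.uIoc_of_le h0.le] at hu
      have hu' : u ∈ Icc (0:ℝ) 1 := ⟨hu.1.le, le_trans hu.2 (by linarith)⟩
      rw [Real.norm_eq_abs, hG]
      simp only
      rw [abs_mul, abs_mul]
      refine mul_le_mul (mul_le_mul (hEM u) (Winv_abs_le_two u) (abs_nonneg _) hME)
        (Df_le hkm hkb hk0 hsym hks hki h0 h12 hαc hαM hαL hMα hLα hu')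
        (abs_nonneg _) (mul_nonneg hME (by norm_num))
  have hedge2 : |∫ u in (1-h)..1, G u| ≤ ((ME * 2) * (Lα * h)) * h := by
    have := intervalIntegral.norm_integral_le_of_norm_le_const
      (C := (ME * 2) * (Lα * h)) (f := G) (a := 1-h) (b := 1) ?_
    · rw [Real.norm_eq_abs] at this
      calc |∫ u in (1-h)..1, G u| ≤ (ME * 2) * (Lα * h) * |1 - (1-h)| := this
      _ = ((ME * 2) * (Lα * h)) * h := by
          rw [show (1:ℝ) - (1-h) = h by ring, abs_of_pos h0]
    · intro u hu
      rw [Set.uIoc_of_le (by linarith : (1:ℝ)-h ≤ 1)] at hu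
      have hu' : u ∈ Icc (0:ℝ) 1 := ⟨by linarith [hu.1], hu.2⟩
      rw [Real.norm_eq_abs, hG]
      simp only
      rw [abs_mul, abs_mul]
      refine mul_le_mul (mul_le_mul (hEM u) (Winv_abs_le_two u) (abs_nonneg _) hME)
        (Df_le hkm hkb hk0 hsym hks hki h0 h12 hαc hαM hαL hMα hLα hu')
        (abs_nonneg _) (mul_nonneg hME (by norm_num))
  -- middle term
  have hmid : ∫ u in h..(1-h), G u
      = ∫ u in Ioc h (1-h), ∫ x in Ioc (0:ℝ) 1, Ff k α E h u x := by
    rw [intervalIntegral.integral_of_le (by linarith : h ≤ 1-h)]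
    refine setIntegral_congr_fun measurableSet_Ioc (fun u hu => ?_)
    have hu' : u ∈ Icc h (1-h) := Ioc_subset_Icc_self hu
    have hu'' : u ∈ Icc (0:ℝ) 1 := ⟨by linarith [hu'.1], by linarith [hu'.2]⟩
    rw [hG]
    simp only
    rw [Wf_interior hkm hkb hk0 hsym hks hki h0 h12 hu', inv_one, mul_one,
      Df_rep hkm hkb hk0 hsym hks hki h0 h12 hαc hαM hMα hu'', ← integral_const_mul]
    rfl
  -- inner split of the middle term
  have hinner : ∀ u : ℝ, ∫ x in Ioc (0:ℝ) 1, Ff k α E h u x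
      = (∫ x in Ioc (0:ℝ) h, Ff k α E h u x) + (∫ x in Ioc h (1-h), Ff k α E h u x)
        + (∫ x in Ioc (1-h) 1, Ff k α E h u x) := by
    intro u
    have e2 : Ioc (0:ℝ) (1-h) ∪ Ioc (1-h) 1 = Ioc 0 1 :=
      Ioc_union_Ioc_eq_Ioc (by linarith) (by linarith)
    have e1 : Ioc (0:ℝ) h ∪ Ioc h (1-h) = Ioc 0 (1-h) :=
      Ioc_union_Ioc_eq_Ioc (by linarith) (by linarith)
    have d2 : Disjoint (Ioc (0:ℝ) (1-h)) (Ioc (1-h) 1) := by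
      rw [Set.Ioc_disjoint_Ioc]
      exact le_max_of_le_right le_rfl |>.trans' (min_le_left _ _)
    have d1 : Disjoint (Ioc (0:ℝ) h) (Ioc h (1-h)) := by
      rw [Set.Ioc_disjoint_Ioc]
      exact le_max_of_le_right le_rfl |>.trans' (min_le_left _ _)
    rw [← e2, setIntegral_union d2 measurableSet_Ioc
      (Ff_intOn hkm hkb h0 hαc hαM hEc hEM hMα hME u 0 (1-h))
      (Ff_intOn hkm hkb h0 hαc hαM hEc hEM hMα hME u (1-h) 1), ← e1,
      setIntegral_union d1 measurableSet_Ioc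
      (Ff_intOn hkm hkb h0 hαc hαM hEc hEM hMα hME u 0 h)
      (Ff_intOn hkm hkb h0 hαc hαM hEc hEM hMα hME u h (1-h))]
  -- integrability of inner-integral functions
  have hPint : ∀ c d : ℝ, IntegrableOn
      (fun u => ∫ x in Ioc c d, Ff k α E h u x) (Ioc h (1-h)) := by
    intro c d
    have hmeasI : AEStronglyMeasurable (fun u => ∫ x in Ioc c d, Ff k α E h u x)
        (volume.restrict (Ioc h (1-h))) :=
      ((meas_of_param (Ff_meas hkm hαc hEc) (Ioc c d)).measurable).aestronglyMeasurable.restrict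
    refine intOn_of_bound measure_Ioc_lt_top hmeasI
      (C := (ME * ((Mα + Mα) * (h⁻¹ * B))) * (volume (Ioc c d)).toReal) ?_
    intro u
    have := norm_setIntegral_le_of_norm_le_const (μ := volume) (s := Ioc c d)
      (f := fun x => Ff k α E h u x) (C := ME * ((Mα + Mα) * (h⁻¹ * B)))
      measure_Ioc_lt_top
      (fun x _ => by
        rw [Real.norm_eq_abs]
        exact Ff_bound_global hkb h0 hαM hEM hMα hME u x)
    rw [Real.norm_eq_abs] at this
    exact this
  have hmid2 : ∫ u in h..(1-h), G u
      = (∫ u in Ioc h (1-h), ∫ x in Ioc (0:ℝ) h, Ff k α E h u x)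
        + (∫ u in Ioc h (1-h), ∫ x in Ioc h (1-h), Ff k α E h u x)
        + (∫ u in Ioc h (1-h), ∫ x in Ioc (1-h) 1, Ff k α E h u x) := by
    rw [hmid]
    rw [setIntegral_congr_fun measurableSet_Ioc (fun u _ => hinner u)]
    have hI12 : IntegrableOn (fun u => (∫ x in Ioc (0:ℝ) h, Ff k α E h u x)
        + (∫ x in Ioc h (1-h), Ff k α E h u x)) (Ioc h (1-h)) :=
      (hPint 0 h).add (hPint h (1-h))
    rw [integral_add hI12 (hPint (1-h) 1), integral_add (hPint 0 h) (hPint h (1-h))]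
  -- bounds on the three pieces
  have hb1 : |∫ u in Ioc h (1-h), ∫ x in Ioc (0:ℝ) h, Ff k α E h u x|
      ≤ (ME * (Lα * h)) * h := by
    have := strip_bound hkm hkb hk0 hks hki h0 hαc hαM hαL hEc hEM hMα hME hLα
      (a := h) (b := 1-h) (c := 0) (d := h) h0.le
    simpa using this
  have hb3 : |∫ u in Ioc h (1-h), ∫ x in Ioc (1-h) 1, Ff k α E h u x|
      ≤ (ME * (Lα * h)) * h := by
    have := strip_bound hkm hkb hk0 hks hki h0 hαc hαM hαL hEc hEM hMα hME hLα
      (a := h) (b := 1-h) (c := 1-h) (d := 1) (by linarith)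
    calc |∫ u in Ioc h (1-h), ∫ x in Ioc (1-h) 1, Ff k α E h u x|
        ≤ (ME * (Lα * h)) * (1 - (1-h)) := this
    _ = (ME * (Lα * h)) * h := by ring
  have hb2 : |∫ u in Ioc h (1-h), ∫ x in Ioc h (1-h), Ff k α E h u x|
      ≤ LE * (Lα * h^2) :=
    mid_bound hkm hkb hk0 hsym hks hki h0 h12 hαc hαM hαL hEc hEM hEL hMα hME hLα hLE
  -- assemble
  have htot : |nuTerm k α E h| ≤ ((ME * 2) * (Lα * h)) * h
      + (((ME * (Lα * h)) * h + LE * (Lα * h^2) + (ME * (Lα * h)) * h)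
        + ((ME * 2) * (Lα * h)) * h) := by
    rw [h394]
    refine le_trans (abs_add_le _ _) ?_
    refine add_le_add hedge1 ?_
    refine le_trans (abs_add_le _ _) ?_
    refine add_le_add ?_ hedge2
    rw [hmid2]
    refine le_trans (abs_add_le _ _) ?_
    refine add_le_add (le_trans (abs_add_le _ _) (add_le_add hb1 hb2)) hb3
  calc |nuTerm k α E h| ≤ _ := htot
  _ = (6 * ME * Lα + LE * Lα) * h ^ 2 := by ring

end Master

end Stmt13Aux

namespace Stmt13Aux

lemma exists_clamp (f : ℝ → ℝ) (hf : ContDiffOn ℝ 1 f (Icc 0 1)) :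
    ∃ g : ℝ → ℝ, Continuous g ∧ (∀ x ∈ Icc (0:ℝ) 1, g x = f x) ∧
      (∃ M, ∀ x, |g x| ≤ M) ∧ (∃ L, ∀ x y, |g x - g y| ≤ L * |x - y|) := by
  set c : ℝ → ℝ := fun x => min (max x 0) 1 with hc
  have hcmem : ∀ x, c x ∈ Icc (0:ℝ) 1 := fun x =>
    ⟨le_min (le_max_right x 0) zero_le_one, min_le_right _ _⟩
  have hcid : ∀ x ∈ Icc (0:ℝ) 1, c x = x := by
    intro x hx
    rw [hc]
    simp only
    rw [max_eq_left hx.1, min_eq_left hx.2]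
  have hclip : ∀ x y, |c x - c y| ≤ |x - y| := by
    intro x y
    calc |c x - c y| ≤ max |max x 0 - max y 0| |(1:ℝ) - 1| := abs_min_sub_min_le_max _ _ _ _
    _ ≤ |x - y| := by
        rw [sub_self, abs_zero]
        refine max_le ?_ (abs_nonneg _)
        exact abs_max_sub_max_le_abs x y 0
  have hccont : Continuous c := by
    rw [hc]; fun_prop
  have hcont : Continuous (f ∘ c) :=
    hf.continuousOn.comp_continuous hccont hcmem
  -- bound
  obtain ⟨M0, hM0⟩ := isCompact_Icc.exists_bound_of_continuousOn hf.continuousOn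
  -- Lipschitz
  have hd : DifferentiableOn ℝ f (Icc 0 1) := hf.differentiableOn one_ne_zero
  have hcd : ContinuousOn (derivWithin f (Icc 0 1)) (Icc 0 1) :=
    hf.continuousOn_derivWithin (uniqueDiffOn_Icc one_pos) le_rfl
  obtain ⟨K0, hK0⟩ := isCompact_Icc.exists_bound_of_continuousOn hcd
  have hlip : LipschitzOnWith K0.toNNReal f (Icc 0 1) := by
    refine (convex_Icc (0:ℝ) 1).lipschitzOnWith_of_nnnorm_derivWithin_le hd ?_
    intro x hx
    rw [← NNReal.coe_le_coe, coe_nnnorm, Real.coe_toNNReal']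
    exact le_trans (hK0 x hx) (le_max_left _ _)
  refine ⟨f ∘ c, hcont, fun x hx => by simp [Function.comp, hcid x hx], ⟨M0, fun x => ?_⟩,
    ⟨(K0.toNNReal : ℝ), fun x y => ?_⟩⟩
  · exact hM0 (c x) (hcmem x)
  · have := hlip.dist_le_mul (c x) (hcmem x) (c y) (hcmem y)
    rw [Real.dist_eq, Real.dist_eq] at this
    calc |(f ∘ c) x - (f ∘ c) y| ≤ (K0.toNNReal : ℝ) * |c x - c y| := this
    _ ≤ (K0.toNNReal : ℝ) * |x - y| :=
        mul_le_mul_of_nonneg_left (hclip x y) (NNReal.coe_nonneg _)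

end Stmt13Aux

open Stmt13Aux in
/-- under the identification constraint `∫ α_j E_j = 0`, the smoothed
constraint deviates from zero only at order `h²`; in particular it tends to zero. -/
theorem stmt_13 (k αj Ej : ℝ → ℝ)
    (hkm : Measurable k) (hkb : ∃ B, ∀ u, |k u| ≤ B) (hk0 : ∀ u, 0 ≤ k u)
    (hsym : ∀ u, k (-u) = k u) (hks : Function.support k ⊆ Set.Icc (-1) 1)
    (hki : ∫ u, k u = 1)
    (hα : ContDiffOn ℝ 1 αj (Set.Icc 0 1))
    (hE : ContDiffOn ℝ 1 Ej (Set.Icc 0 1))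
    (hEpos : ∀ x ∈ Set.Icc (0:ℝ) 1, 0 < Ej x)
    (hident : ∫ x in (0:ℝ)..1, αj x * Ej x = 0) :
    (∃ C > 0, ∃ δ > 0, ∀ h : ℝ, 0 < h → h < δ → |nuTerm k αj Ej h| ≤ C * h^2) ∧
    Filter.Tendsto (nuTerm k αj Ej) (nhdsWithin 0 (Set.Ioi 0)) (nhds 0) := by
  obtain ⟨B, hkb⟩ := hkb
  obtain ⟨α, hαc, hαeq, ⟨Mα, hαM⟩, ⟨Lα, hαL⟩⟩ := exists_clamp αj hα
  obtain ⟨E, hEc, hEeq, ⟨ME, hEM⟩, ⟨LE, hEL⟩⟩ := exists_clamp Ej hE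
  have hME : 0 ≤ ME := le_trans (abs_nonneg _) (hEM 0)
  have hLα : 0 ≤ Lα := by
    have := hαL 0 1
    simp only [zero_sub, abs_neg, abs_one, mul_one] at this
    linarith [abs_nonneg (α 0 - α 1)]
  have hLE : 0 ≤ LE := by
    have := hEL 0 1
    simp only [zero_sub, abs_neg, abs_one, mul_one] at this
    linarith [abs_nonneg (E 0 - E 1)]
  -- nuTerm only sees αj, Ej on [0,1]
  have hcong : ∀ h : ℝ, nuTerm k αj Ej h = nuTerm k α E h := by
    intro h
    rw [nuTerm, nuTerm]
    refine intervalIntegral.integral_congr (fun x hx => ?_)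
    rw [Set.uIcc_of_le zero_le_one] at hx
    refine intervalIntegral.integral_congr (fun u hu => ?_)
    rw [Set.uIcc_of_le zero_le_one] at hu
    rw [hαeq x hx, hEeq u hu]
  have hident' : ∫ x in (0:ℝ)..1, α x * E x = 0 := by
    have e : ∫ x in (0:ℝ)..1, α x * E x = ∫ x in (0:ℝ)..1, αj x * Ej x := by
      refine intervalIntegral.integral_congr (fun x hx => ?_)
      rw [Set.uIcc_of_le zero_le_one] at hx
      rw [hαeq x hx, hEeq x hx]
    rw [e, hident]
  set C : ℝ := 6 * ME * Lα + LE * Lα + 1 with hC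
  have hCpos : 0 < C := by positivity
  have hbound : ∀ h : ℝ, 0 < h → h < 1/2 → |nuTerm k αj Ej h| ≤ C * h^2 := by
    intro h h0 h12
    rw [hcong h]
    calc |nuTerm k α E h| ≤ (6 * ME * Lα + LE * Lα) * h ^ 2 :=
      nu_bound hkm hkb hk0 hsym hks hki h0 h12 hαc hαM hαL hEc hEM hEL hident'
    _ ≤ C * h^2 := by
        refine mul_le_mul_of_nonneg_right ?_ (sq_nonneg h)
        rw [hC]; linarith
  constructor
  · exact ⟨C, hCpos, 1/2, by norm_num, hbound⟩
  · have hev : ∀ᶠ h in nhdsWithin 0 (Set.Ioi 0), ‖nuTerm k αj Ej h‖ ≤ C * h^2 := by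
      filter_upwards [Ioo_mem_nhdsGT_of_mem (⟨le_refl (0:ℝ), by norm_num⟩ :
        (0:ℝ) ∈ Set.Ico (0:ℝ) (1/2))] with h hh
      rw [Real.norm_eq_abs]
      exact hbound h hh.1 hh.2
    have hten : Filter.Tendsto (fun h : ℝ => C * h^2) (nhdsWithin 0 (Set.Ioi 0)) (nhds 0) := by
      have h1 : Filter.Tendsto (fun h : ℝ => C * h^2) (nhds 0) (nhds (C * 0^2)) :=
        (Filter.Tendsto.const_mul C ((continuous_pow 2).tendsto 0))
      rw [show C * 0^2 = 0 by norm_num] at h1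
      exact h1.mono_left nhdsWithin_le_nhds
    exact squeeze_zero_norm' hev hten
end
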